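/- Let u, v be two distinct points of the open unit disk in ℂ. Then the kinematic measure of the set of geodesics of the Poincaré disk separating u and v equals 2·d_D(u,v). Concretely: ∫_{0}^{2π} ∫_{0}^{∞} 1[exactly one of u, v satisfies |x − coth(t)·e^{iθ}| < 1/sinh(t)] · cosh(t) dt dθ = 2·arcosh(1 + 2|u − v|²/((1 − |u|²)(1 − |v|²))). -/

import Mathlib

open Real MeasureTheory
open scoped Classical

/-- The inverse hyperbolic cosine. -/
noncomputable def arcosh (x : ℝ) : ℝ := Real.log (x + Real.sqrt (x ^ 2 - 1))

/-- The hyperbolic distance between two points of the Poincaré disk. -/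
noncomputable def poincareDist (u v : ℂ) : ℝ :=
  _root_.arcosh (1 + 2 * ‖u - v‖ ^ 2 /
    ((1 - ‖u‖ ^ 2) * (1 - ‖v‖ ^ 2)))

/-- A point `x` of the disk lies on the inner side of the geodesic with polar
coordinates `(t, θ)`, i.e. the Euclidean circle with center `coth t · e^{iθ}` and
radius `1 / sinh t`. -/
def innerSide (x : ℂ) (t θ : ℝ) : Prop :=
  ‖x - (Real.cosh t / Real.sinh t) * Complex.exp (θ * Complex.I)‖ <
    1 / Real.sinh t

set_option maxHeartbeats 1000000

namespace KMSG

/-- Scaled "tangential" coordinate: signed sinh of the distance to the diameter of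
direction `θ`. -/
noncomputable def pp (x : ℂ) (θ : ℝ) : ℝ :=
  2 * (x.re * Real.sin θ - x.im * Real.cos θ) / (1 - (x.re ^ 2 + x.im ^ 2))

/-- Scaled "radial" coordinate. -/
noncomputable def mm (x : ℂ) (θ : ℝ) : ℝ :=
  2 * (x.re * Real.cos θ + x.im * Real.sin θ) / (1 - (x.re ^ 2 + x.im ^ 2))

/-- The sinh of the critical geodesic parameter. -/
noncomputable def SS (x : ℂ) (θ : ℝ) : ℝ := mm x θ / Real.sqrt (1 + pp x θ ^ 2)

/-- Time coordinate of the point on the hyperboloid. -/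
noncomputable def U0 (x : ℂ) : ℝ :=
  (1 + (x.re ^ 2 + x.im ^ 2)) / (1 - (x.re ^ 2 + x.im ^ 2))

lemma sqrt1pp_pos (x : ℂ) (θ : ℝ) : 0 < Real.sqrt (1 + pp x θ ^ 2) :=
  Real.sqrt_pos.mpr (by positivity)

lemma continuous_pp (x : ℂ) : Continuous (pp x) := by
  unfold pp; fun_prop

lemma continuous_mm (x : ℂ) : Continuous (mm x) := by
  unfold mm; fun_prop

lemma continuous_SS (x : ℂ) : Continuous (SS x) := by
  refine (continuous_mm x).div ((continuous_const.add ((continuous_pp x).pow 2)).sqrt) ?_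
  exact fun θ => (sqrt1pp_pos x θ).ne'

lemma pp_add_two_pi (x : ℂ) (θ : ℝ) : pp x (θ + 2 * π) = pp x θ := by
  unfold pp; rw [Real.sin_add_two_pi, Real.cos_add_two_pi]

lemma mm_add_two_pi (x : ℂ) (θ : ℝ) : mm x (θ + 2 * π) = mm x θ := by
  unfold mm; rw [Real.sin_add_two_pi, Real.cos_add_two_pi]

lemma pp_add_pi (x : ℂ) (θ : ℝ) : pp x (θ + π) = - pp x θ := by
  unfold pp; rw [Real.sin_add_pi, Real.cos_add_pi]; ring

lemma mm_add_pi (x : ℂ) (θ : ℝ) : mm x (θ + π) = - mm x θ := by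
  unfold mm; rw [Real.sin_add_pi, Real.cos_add_pi]; ring

lemma pp_sub_pi (x : ℂ) (θ : ℝ) : pp x (θ - π) = - pp x θ := by
  unfold pp; rw [Real.sin_sub_pi, Real.cos_sub_pi]; ring

lemma SS_add_pi (x : ℂ) (θ : ℝ) : SS x (θ + π) = - SS x θ := by
  unfold SS; rw [pp_add_pi, mm_add_pi, neg_sq, neg_div]

lemma SS_add_two_pi (x : ℂ) (θ : ℝ) : SS x (θ + 2 * π) = SS x θ := by
  unfold SS; rw [pp_add_two_pi, mm_add_two_pi]

lemma hasDerivAt_gg (x : ℂ) (θ : ℝ) :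
    HasDerivAt (fun θ => Real.arsinh (pp x θ)) (SS x θ) θ := by
  have h1 : HasDerivAt (fun θ : ℝ => 2 * (x.re * Real.sin θ - x.im * Real.cos θ))
      (2 * (x.re * Real.cos θ + x.im * Real.sin θ)) θ := by
    have hs := Real.hasDerivAt_sin θ
    have hc := Real.hasDerivAt_cos θ
    have h := ((hs.const_mul x.re).sub (hc.const_mul x.im)).const_mul (2 : ℝ)
    refine h.congr_deriv ?_; ring
  have h2 : HasDerivAt (pp x) (mm x θ) θ := by
    have := h1.div_const (1 - (x.re ^ 2 + x.im ^ 2))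
    exact this
  have h3 := (Real.hasDerivAt_arsinh (pp x θ)).comp θ h2
  refine h3.congr_deriv ?_
  unfold SS
  rw [div_eq_mul_inv, mul_comm]

lemma U0_sq {x : ℂ} (hx : x.re ^ 2 + x.im ^ 2 < 1) (θ : ℝ) :
    U0 x ^ 2 = 1 + mm x θ ^ 2 + pp x θ ^ 2 := by
  have hα : (0:ℝ) < 1 - (x.re ^ 2 + x.im ^ 2) := by linarith
  have hsc := Real.sin_sq_add_cos_sq θ
  have key : (1 + (x.re ^ 2 + x.im ^ 2)) ^ 2
      = (1 - (x.re ^ 2 + x.im ^ 2)) ^ 2 + (2 * (x.re * Real.cos θ + x.im * Real.sin θ)) ^ 2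
        + (2 * (x.re * Real.sin θ - x.im * Real.cos θ)) ^ 2 := by
    linear_combination (-(4 * (x.re ^ 2 + x.im ^ 2))) * hsc
  unfold U0 mm pp
  rw [div_pow, div_pow, div_pow, key]
  field_simp

lemma U0_pos {x : ℂ} (hx : x.re ^ 2 + x.im ^ 2 < 1) : 0 < U0 x := by
  have h0 : (0:ℝ) ≤ x.re ^ 2 + x.im ^ 2 := by positivity
  exact div_pos (by linarith) (by linarith)

lemma U0_ge_one {x : ℂ} (hx : x.re ^ 2 + x.im ^ 2 < 1) : 1 ≤ U0 x := by
  have h0 : (0:ℝ) ≤ x.re ^ 2 + x.im ^ 2 := by positivity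
  rw [U0, le_div_iff₀ (by linarith)]
  linarith

lemma mm_sq_lt {x : ℂ} (hx : x.re ^ 2 + x.im ^ 2 < 1) (θ : ℝ) :
    mm x θ ^ 2 < U0 x ^ 2 := by
  have := U0_sq hx θ
  nlinarith [sq_nonneg (pp x θ)]

lemma SS_eq {x : ℂ} (hx : x.re ^ 2 + x.im ^ 2 < 1) (θ : ℝ) :
    SS x θ = (mm x θ / U0 x) / Real.sqrt (1 - (mm x θ / U0 x) ^ 2) := by
  have hU := U0_pos hx
  have h3 := U0_sq hx θ
  have h1 : 1 - (mm x θ / U0 x) ^ 2 = (1 + pp x θ ^ 2) / U0 x ^ 2 := by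
    field_simp
    linarith
  rw [h1, show (1 + pp x θ ^ 2) / U0 x ^ 2 = (Real.sqrt (1 + pp x θ ^ 2) / U0 x) ^ 2 by
      rw [div_pow, Real.sq_sqrt (by positivity)],
    Real.sqrt_sq (by positivity)]
  unfold SS
  rw [div_div_div_cancel_right₀ hU.ne']

lemma key_le {a b : ℝ} (ha : a ^ 2 < 1) (hb : b ^ 2 < 1) (h : a ≤ b) :
    a * Real.sqrt (1 - b ^ 2) ≤ b * Real.sqrt (1 - a ^ 2) := by
  have hA : 0 < Real.sqrt (1 - a ^ 2) := Real.sqrt_pos.mpr (by linarith)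
  have hB : 0 < Real.sqrt (1 - b ^ 2) := Real.sqrt_pos.mpr (by linarith)
  rcases le_or_gt a 0 with ha0 | ha0
  · rcases le_or_gt 0 b with hb0 | hb0
    · exact le_trans (mul_nonpos_iff.mpr (Or.inr ⟨ha0, hB.le⟩)) (mul_nonneg hb0 hA.le)
    · -- a ≤ b < 0
      have hba : b ^ 2 ≤ a ^ 2 := by nlinarith
      have hAB : Real.sqrt (1 - a ^ 2) ≤ Real.sqrt (1 - b ^ 2) := Real.sqrt_le_sqrt (by linarith)
      have := mul_le_mul (neg_le_neg h) hAB hA.le (by linarith : (0:ℝ) ≤ -a)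
      linarith [this]
  · -- 0 < a ≤ b
    have hab : a ^ 2 ≤ b ^ 2 := by nlinarith
    have hBA : Real.sqrt (1 - b ^ 2) ≤ Real.sqrt (1 - a ^ 2) := Real.sqrt_le_sqrt (by linarith)
    exact mul_le_mul h hBA hB.le (by linarith)

lemma key_lt {a b : ℝ} (ha : a ^ 2 < 1) (hb : b ^ 2 < 1) (h : a < b) :
    a * Real.sqrt (1 - b ^ 2) < b * Real.sqrt (1 - a ^ 2) := by
  have hA : 0 < Real.sqrt (1 - a ^ 2) := Real.sqrt_pos.mpr (by linarith)
  have hB : 0 < Real.sqrt (1 - b ^ 2) := Real.sqrt_pos.mpr (by linarith)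
  rcases le_or_gt a 0 with ha0 | ha0
  · rcases lt_or_ge 0 b with hb0 | hb0
    · exact lt_of_le_of_lt (mul_nonpos_iff.mpr (Or.inr ⟨ha0, hB.le⟩)) (mul_pos hb0 hA)
    · -- a < b ≤ 0
      have hba : b ^ 2 < a ^ 2 := by nlinarith
      have hAB : Real.sqrt (1 - a ^ 2) < Real.sqrt (1 - b ^ 2) :=
        Real.sqrt_lt_sqrt (by linarith) (by linarith)
      have hna : 0 < -a := by linarith
      have h1 : (-a) * Real.sqrt (1 - a ^ 2) < (-a) * Real.sqrt (1 - b ^ 2) :=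
        mul_lt_mul_of_pos_left hAB hna
      have h2 : (-b) * Real.sqrt (1 - a ^ 2) ≤ (-a) * Real.sqrt (1 - a ^ 2) :=
        mul_le_mul_of_nonneg_right (by linarith) hA.le
      linarith
  · -- 0 < a < b
    calc a * Real.sqrt (1 - b ^ 2) ≤ a * Real.sqrt (1 - a ^ 2) :=
          mul_le_mul_of_nonneg_left (Real.sqrt_le_sqrt (by nlinarith)) ha0.le
      _ < b * Real.sqrt (1 - a ^ 2) := mul_lt_mul_of_pos_right h hA

lemma core_iff {a b : ℝ} (ha : a ^ 2 < 1) (hb : b ^ 2 < 1) :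
    a / Real.sqrt (1 - a ^ 2) ≤ b / Real.sqrt (1 - b ^ 2) ↔ a ≤ b := by
  have hA : 0 < Real.sqrt (1 - a ^ 2) := Real.sqrt_pos.mpr (by linarith)
  have hB : 0 < Real.sqrt (1 - b ^ 2) := Real.sqrt_pos.mpr (by linarith)
  rw [div_le_div_iff₀ hA hB]
  constructor
  · intro h
    by_contra hc
    push_neg at hc
    exact absurd h (not_le.mpr (key_lt hb ha hc))
  · exact key_le ha hb

lemma SS_le_SS_iff {u v : ℂ} (hu : u.re ^ 2 + u.im ^ 2 < 1) (hv : v.re ^ 2 + v.im ^ 2 < 1)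
    (θ : ℝ) : SS u θ ≤ SS v θ ↔ U0 v * mm u θ ≤ U0 u * mm v θ := by
  have hUu := U0_pos hu
  have hUv := U0_pos hv
  have hau : (mm u θ / U0 u) ^ 2 < 1 := by
    rw [div_pow, div_lt_one (by positivity)]
    exact mm_sq_lt hu θ
  have hav : (mm v θ / U0 v) ^ 2 < 1 := by
    rw [div_pow, div_lt_one (by positivity)]
    exact mm_sq_lt hv θ
  rw [SS_eq hu θ, SS_eq hv θ, core_iff hau hav, div_le_div_iff₀ hUu hUv,
    mul_comm (mm u θ) (U0 v), mul_comm (mm v θ) (U0 u)]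

lemma not_innerSide_of_nonpos {x : ℂ} {t θ : ℝ} (ht : t ≤ 0) : ¬ innerSide x t θ := by
  unfold innerSide
  intro h
  have h1 : Real.sinh t ≤ 0 := Real.sinh_nonpos_iff.mpr ht
  have h2 : 1 / Real.sinh t ≤ 0 := one_div_nonpos.mpr h1
  exact (norm_nonneg _).not_gt (h.trans_le h2)

lemma innerSide_iff {x : ℂ} (hx : x.re ^ 2 + x.im ^ 2 < 1) {t : ℝ} (ht : 0 < t) (θ : ℝ) :
    innerSide x t θ ↔ Real.sinh t < SS x θ := by
  have hS : 0 < Real.sinh t := Real.sinh_pos_iff.mpr ht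
  have hK : 0 < Real.cosh t := Real.cosh_pos t
  have hK2 : Real.cosh t ^ 2 = 1 + Real.sinh t ^ 2 := by rw [Real.cosh_sq]; ring
  have hα : (0:ℝ) < 1 - (x.re ^ 2 + x.im ^ 2) := by linarith
  have hsc := Real.sin_sq_add_cos_sq θ
  have hQin : (0:ℝ) < (1 - (x.re ^ 2 + x.im ^ 2)) ^ 2 + (2 * (x.re * Real.sin θ - x.im * Real.cos θ)) ^ 2 := by positivity
  set Q : ℝ := Real.sqrt ((1 - (x.re ^ 2 + x.im ^ 2)) ^ 2 +
      (2 * (x.re * Real.sin θ - x.im * Real.cos θ)) ^ 2) with hQdef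
  have hQpos : 0 < Q := Real.sqrt_pos.mpr hQin
  have hQ2 : Q ^ 2 = (1 - (x.re ^ 2 + x.im ^ 2)) ^ 2 +
      (2 * (x.re * Real.sin θ - x.im * Real.cos θ)) ^ 2 := Real.sq_sqrt hQin.le
  have hb2 : (1 + (x.re ^ 2 + x.im ^ 2)) ^ 2 =
      Q ^ 2 + (2 * (x.re * Real.cos θ + x.im * Real.sin θ)) ^ 2 := by
    rw [hQ2]; linear_combination (-(4 * (x.re ^ 2 + x.im ^ 2))) * hsc
  have hbpos : (0:ℝ) < 1 + (x.re ^ 2 + x.im ^ 2) := by positivity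
  have he : Complex.exp (θ * Complex.I) = (Real.cos θ : ℂ) + (Real.sin θ : ℂ) * Complex.I := by
    rw [Complex.exp_mul_I, Complex.ofReal_cos, Complex.ofReal_sin]
  -- step 0 : reduce to a real inequality
  unfold innerSide
  rw [show ((Real.cosh t : ℂ) / (Real.sinh t : ℂ)) = ((Real.cosh t / Real.sinh t : ℝ) : ℂ) from
    (Complex.ofReal_div _ _).symm]
  rw [Complex.norm_def, Real.sqrt_lt' (by positivity : (0:ℝ) < 1 / Real.sinh t), div_pow,
    one_pow, lt_div_iff₀ (by positivity : (0:ℝ) < Real.sinh t ^ 2)]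
  have hns : Complex.normSq (x - ((Real.cosh t / Real.sinh t : ℝ) : ℂ) * Complex.exp (θ * Complex.I))
      * Real.sinh t ^ 2
      = (x.re * Real.sinh t - Real.cosh t * Real.cos θ) ^ 2
        + (x.im * Real.sinh t - Real.cosh t * Real.sin θ) ^ 2 := by
    rw [he]
    simp only [Complex.normSq_apply, Complex.sub_re, Complex.sub_im, Complex.mul_re,
      Complex.mul_im, Complex.add_re, Complex.add_im, Complex.ofReal_re, Complex.ofReal_im,
      Complex.I_re, Complex.I_im]
    field_simp
    ring
  rw [hns]
  -- step 2 : to the linear form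
  have hid : 1 - ((x.re * Real.sinh t - Real.cosh t * Real.cos θ) ^ 2
      + (x.im * Real.sinh t - Real.cosh t * Real.sin θ) ^ 2)
      = Real.sinh t * (Real.cosh t * (2 * (x.re * Real.cos θ + x.im * Real.sin θ))
          - (1 + (x.re ^ 2 + x.im ^ 2)) * Real.sinh t) := by
    linear_combination (-(Real.cosh t ^ 2)) * hsc - hK2
  have h2 : (x.re * Real.sinh t - Real.cosh t * Real.cos θ) ^ 2
      + (x.im * Real.sinh t - Real.cosh t * Real.sin θ) ^ 2 < 1 ↔
      (1 + (x.re ^ 2 + x.im ^ 2)) * Real.sinh t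
        < Real.cosh t * (2 * (x.re * Real.cos θ + x.im * Real.sin θ)) := by
    constructor
    · intro h
      have hpos : 0 < Real.sinh t * (Real.cosh t * (2 * (x.re * Real.cos θ + x.im * Real.sin θ))
          - (1 + (x.re ^ 2 + x.im ^ 2)) * Real.sinh t) := by
        rw [← hid]; linarith
      have := (mul_pos_iff_of_pos_left hS).mp hpos
      linarith
    · intro h
      have hpos := mul_pos hS (sub_pos.mpr h)
      linarith [hid, hpos]
  rw [h2]
  -- step 3 : eliminate cosh
  have h3 : (1 + (x.re ^ 2 + x.im ^ 2)) * Real.sinh t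
      < Real.cosh t * (2 * (x.re * Real.cos θ + x.im * Real.sin θ)) ↔
      Real.sinh t * Q < 2 * (x.re * Real.cos θ + x.im * Real.sin θ) := by
    have e : (Real.cosh t * (2 * (x.re * Real.cos θ + x.im * Real.sin θ))) ^ 2
        - ((1 + (x.re ^ 2 + x.im ^ 2)) * Real.sinh t) ^ 2
        = (2 * (x.re * Real.cos θ + x.im * Real.sin θ)) ^ 2 - (Real.sinh t * Q) ^ 2 := by
      linear_combination ((2 * (x.re * Real.cos θ + x.im * Real.sin θ)) ^ 2) * hK2
        - (Real.sinh t ^ 2) * hb2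
    constructor
    · intro h
      have hm : 0 < 2 * (x.re * Real.cos θ + x.im * Real.sin θ) := by
        nlinarith [mul_pos hbpos hS, hK]
      have hsq : ((1 + (x.re ^ 2 + x.im ^ 2)) * Real.sinh t) ^ 2
          < (Real.cosh t * (2 * (x.re * Real.cos θ + x.im * Real.sin θ))) ^ 2 := by
        nlinarith [h, mul_pos hbpos hS]
      have h5 : (Real.sinh t * Q) ^ 2 < (2 * (x.re * Real.cos θ + x.im * Real.sin θ)) ^ 2 := by
        linarith [e, hsq]
      nlinarith [h5, hm, mul_nonneg hS.le hQpos.le]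
    · intro h
      have hm : 0 < 2 * (x.re * Real.cos θ + x.im * Real.sin θ) :=
        lt_of_le_of_lt (mul_nonneg hS.le hQpos.le) h
      have h5 : (Real.sinh t * Q) ^ 2 < (2 * (x.re * Real.cos θ + x.im * Real.sin θ)) ^ 2 := by
        nlinarith [h, mul_pos hS hQpos]
      have hsq : ((1 + (x.re ^ 2 + x.im ^ 2)) * Real.sinh t) ^ 2
          < (Real.cosh t * (2 * (x.re * Real.cos θ + x.im * Real.sin θ))) ^ 2 := by
        linarith [e, h5]
      nlinarith [hsq, mul_pos hbpos hS, mul_pos hK hm]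
  rw [h3]
  -- step 4 : identify with SS
  unfold SS pp mm
  have hQα : Real.sqrt (1 + (2 * (x.re * Real.sin θ - x.im * Real.cos θ)
      / (1 - (x.re ^ 2 + x.im ^ 2))) ^ 2) = Q / (1 - (x.re ^ 2 + x.im ^ 2)) := by
    rw [show 1 + (2 * (x.re * Real.sin θ - x.im * Real.cos θ) / (1 - (x.re ^ 2 + x.im ^ 2))) ^ 2
        = (Q / (1 - (x.re ^ 2 + x.im ^ 2))) ^ 2 by
      rw [div_pow, div_pow, hQ2]; field_simp]
    exact Real.sqrt_sq (by positivity)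
  rw [hQα]
  rw [div_div_div_cancel_right₀ hα.ne']
  rw [lt_div_iff₀ hQpos]

lemma xor_max_aux (x : ℝ) : max x 0 - max (-x) 0 = x := by
  rcases le_total x 0 with h | h
  · rw [max_eq_right h, max_eq_left (neg_nonneg.mpr h)]; ring
  · rw [max_eq_left h, max_eq_right (neg_nonpos.mpr h)]; ring

lemma xor_sum (a b : ℝ) :
    (max (max a b) 0 - max (min a b) 0) + (max (max (-a) (-b)) 0 - max (min (-a) (-b)) 0)
      = |a - b| := by
  have h1 := xor_max_aux a
  have h2 := xor_max_aux b
  rcases le_total a b with h | h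
  · rw [max_eq_right h, min_eq_left h, max_eq_left (neg_le_neg h), min_eq_right (neg_le_neg h),
      abs_of_nonpos (by linarith : a - b ≤ 0)]
    linarith
  · rw [max_eq_left h, min_eq_right h, max_eq_right (neg_le_neg h), min_eq_left (neg_le_neg h),
      abs_of_nonneg (by linarith : 0 ≤ a - b)]
    linarith

lemma cosh_arsinh_sub (U V m n p q : ℝ) (hU2 : U ^ 2 = 1 + m ^ 2 + p ^ 2)
    (hV2 : V ^ 2 = 1 + n ^ 2 + q ^ 2) (hU1 : 1 ≤ U) (hV1 : 1 ≤ V) (hk0 : V * m = U * n) :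
    Real.cosh (Real.arsinh p - Real.arsinh q) = U * V - (m * n + p * q) := by
  have hUV : 0 ≤ U * V - m * n := by
    have hm2 : m ^ 2 ≤ U ^ 2 - 1 := by linarith [sq_nonneg p]
    have hn2 : n ^ 2 ≤ V ^ 2 - 1 := by linarith [sq_nonneg q]
    have hA0 : (0:ℝ) ≤ U ^ 2 - 1 := by nlinarith [hU1]
    have s1 : (m * n) ^ 2 ≤ (U ^ 2 - 1) * (V ^ 2 - 1) := by
      nlinarith [hm2, hn2, sq_nonneg n, hA0]
    have s2 : (U ^ 2 - 1) * (V ^ 2 - 1) ≤ (U * V - 1) ^ 2 := by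
      nlinarith [sq_nonneg (U - V)]
    have h1 : (0:ℝ) ≤ U * V - 1 := by nlinarith [hU1, hV1]
    have s3 : m * n ≤ U * V - 1 := by
      nlinarith [s1, s2, h1]
    linarith
  have hs : Real.sqrt (1 + p ^ 2) * Real.sqrt (1 + q ^ 2) = U * V - m * n := by
    rw [← Real.sqrt_mul (by positivity)]
    rw [show (1 + p ^ 2) * (1 + q ^ 2) = (U * V - m * n) ^ 2 by
      linear_combination (-(1 + q ^ 2)) * hU2 + (-(U ^ 2 - m ^ 2)) * hV2 + (U * n - V * m) * hk0]
    exact Real.sqrt_sq hUV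
  rw [Real.cosh_sub, Real.cosh_arsinh, Real.cosh_arsinh, Real.sinh_arsinh, Real.sinh_arsinh, hs]
  ring

lemma cross_helper {a b p q P Q : ℝ} (ha : a ≠ 0) (hb : b ≠ 0)
    (h : P / b * (2 * p / a) = Q / a * (2 * q / b)) : P * p = Q * q := by
  field_simp at h
  have h3 : (P * p) * (2 * (a * b)) = (Q * q) * (2 * (a * b)) := by linear_combination (2 * (a * b)) * h
  exact mul_right_cancel₀ (by simp [ha, hb] : (2:ℝ) * (a * b) ≠ 0) h3

lemma inner_integral (u v : ℂ) (hu' : u.re ^ 2 + u.im ^ 2 < 1) (hv' : v.re ^ 2 + v.im ^ 2 < 1)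
    (θ : ℝ) :
    (∫ t in Set.Ioi (0:ℝ),
        (if Xor' (innerSide u t θ) (innerSide v t θ) then Real.cosh t else 0))
      = max (max (SS u θ) (SS v θ)) 0 - max (min (SS u θ) (SS v θ)) 0 := by
  set Su := SS u θ with hSu
  set Sv := SS v θ with hSv
  set A := Real.arsinh (max (max Su Sv) 0) with hA
  set B := Real.arsinh (max (min Su Sv) 0) with hB
  have hBA : B ≤ A := Real.arsinh_le_arsinh.mpr (max_le_max (min_le_max) le_rfl)
  have hB0 : 0 ≤ B := by
    rw [hB]
    exact Real.arsinh_nonneg_iff.mpr (le_max_right _ _)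
  have hptwise : ∀ t : ℝ, t ≠ A → t ≠ B →
      (if Xor' (innerSide u t θ) (innerSide v t θ) then Real.cosh t else 0)
        = (Set.Ioc B A).indicator Real.cosh t := by
    intro t htA htB
    by_cases hmem : t ∈ Set.Ioc B A
    · have htA' : t < A := lt_of_le_of_ne hmem.2 htA
      have ht0 : 0 < t := lt_of_le_of_lt hB0 hmem.1
      have h1 : Real.sinh t < max (max Su Sv) 0 := by
        have := Real.sinh_lt_sinh.mpr htA'
        rwa [hA, Real.sinh_arsinh] at this
      have h2 : max (min Su Sv) 0 < Real.sinh t := by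
        have := Real.sinh_lt_sinh.mpr hmem.1
        rwa [hB, Real.sinh_arsinh] at this
      have hst0 : 0 < Real.sinh t := lt_of_le_of_lt (le_max_right _ _) h2
      have hmax : Real.sinh t < max Su Sv := by
        rcases le_or_gt (max Su Sv) 0 with h | h
        · rw [max_eq_right h] at h1; linarith
        · rwa [max_eq_left h.le] at h1
      have hmin : min Su Sv < Real.sinh t := lt_of_le_of_lt (le_max_left _ _) h2
      rw [Set.indicator_of_mem hmem, if_pos]
      rcases le_total Su Sv with hc | hc
      · rw [min_eq_left hc] at hmin
        rw [max_eq_right hc] at hmax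
        exact Or.inr ⟨(innerSide_iff hv' ht0 θ).mpr hmax,
          fun hcon => absurd ((innerSide_iff hu' ht0 θ).mp hcon) (not_lt.mpr hmin.le)⟩
      · rw [min_eq_right hc] at hmin
        rw [max_eq_left hc] at hmax
        exact Or.inl ⟨(innerSide_iff hu' ht0 θ).mpr hmax,
          fun hcon => absurd ((innerSide_iff hv' ht0 θ).mp hcon) (not_lt.mpr hmin.le)⟩
    · rw [Set.indicator_of_notMem hmem, if_neg]
      rcases le_or_gt t 0 with ht0 | ht0
      · rintro (⟨h, -⟩ | ⟨h, -⟩) <;> exact (not_innerSide_of_nonpos ht0) h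
      · rcases le_or_gt t B with htb | htb
        · have htb' : t < B := lt_of_le_of_ne htb htB
          have h2 : Real.sinh t < max (min Su Sv) 0 := by
            have := Real.sinh_lt_sinh.mpr htb'
            rwa [hB, Real.sinh_arsinh] at this
          have hst0 : 0 < Real.sinh t := Real.sinh_pos_iff.mpr ht0
          have hmin : Real.sinh t < min Su Sv := by
            rcases le_or_gt (min Su Sv) 0 with h | h
            · rw [max_eq_right h] at h2; linarith
            · rwa [max_eq_left h.le] at h2
          have hu1 : innerSide u t θ :=
            (innerSide_iff hu' ht0 θ).mpr (lt_of_lt_of_le hmin (min_le_left _ _))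
          have hv1 : innerSide v t θ :=
            (innerSide_iff hv' ht0 θ).mpr (lt_of_lt_of_le hmin (min_le_right _ _))
          rintro (⟨-, h⟩ | ⟨-, h⟩)
          exacts [h hv1, h hu1]
        · have hAt : A < t := by
            by_contra h
            push_neg at h
            exact hmem ⟨htb, h⟩
          have h1 : max (max Su Sv) 0 < Real.sinh t := by
            have := Real.sinh_lt_sinh.mpr hAt
            rwa [hA, Real.sinh_arsinh] at this
          have hnu : ¬ innerSide u t θ := fun hcon =>
            absurd ((innerSide_iff hu' ht0 θ).mp hcon)
              (not_lt.mpr (le_trans (le_trans (le_max_left Su Sv) (le_max_left _ 0)) h1.le))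
          have hnv : ¬ innerSide v t θ := fun hcon =>
            absurd ((innerSide_iff hv' ht0 θ).mp hcon)
              (not_lt.mpr (le_trans (le_trans (le_max_right Su Sv) (le_max_left _ 0)) h1.le))
          rintro (⟨h, -⟩ | ⟨h, -⟩)
          exacts [hnu h, hnv h]
  have hnull : volume ({A, B} : Set ℝ) = 0 :=
    (Set.toFinite ({A, B} : Set ℝ)).measure_zero volume
  have hae : ∀ᵐ t ∂(volume : Measure ℝ), t ∈ Set.Ioi (0:ℝ) →
      (if Xor' (innerSide u t θ) (innerSide v t θ) then Real.cosh t else 0)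
        = (Set.Ioc B A).indicator Real.cosh t := by
    filter_upwards [measure_eq_zero_iff_ae_notMem.mp hnull] with t ht _
    exact hptwise t (fun h => ht (by simp [h])) (fun h => ht (by simp [h]))
  rw [MeasureTheory.setIntegral_congr_ae measurableSet_Ioi hae]
  rw [MeasureTheory.integral_indicator measurableSet_Ioc]
  have hsub : Set.Ioc B A ⊆ Set.Ioi (0:ℝ) := fun t ht => lt_of_le_of_lt hB0 ht.1
  rw [MeasureTheory.Measure.restrict_restrict measurableSet_Ioc,
    Set.inter_eq_self_of_subset_left hsub]
  have : ∫ t in Set.Ioc B A, Real.cosh t = Real.sinh A - Real.sinh B := by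
    rw [← intervalIntegral.integral_of_le hBA]
    rw [intervalIntegral.integral_eq_sub_of_hasDerivAt
      (fun t _ => Real.hasDerivAt_sinh t) (Real.continuous_cosh.intervalIntegrable _ _)]
  rw [this, hA, hB, Real.sinh_arsinh, Real.sinh_arsinh]

end KMSG

open KMSG in
/-- The kinematic measure of the set of geodesics of the Poincaré disk separating
two distinct points `u, v` of the open unit disk equals twice their hyperbolic
distance. -/
theorem kinematic_measure_separating_geodesics (u v : ℂ)
    (hu : ‖u‖ < 1) (hv : ‖v‖ < 1) (huv : u ≠ v) :
    ∫ θ in (0 : ℝ)..(2 * π),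
      ∫ t in Set.Ioi (0 : ℝ),
        (if Xor' (innerSide u t θ) (innerSide v t θ) then Real.cosh t else 0)
      = 2 * poincareDist u v := by
  have hu' : u.re ^ 2 + u.im ^ 2 < 1 := by
    have h := Complex.sq_norm u
    rw [Complex.normSq_apply] at h
    nlinarith [norm_nonneg u]
  have hv' : v.re ^ 2 + v.im ^ 2 < 1 := by
    have h := Complex.sq_norm v
    rw [Complex.normSq_apply] at h
    nlinarith [norm_nonneg v]
  have hαu : (0:ℝ) < 1 - (u.re ^ 2 + u.im ^ 2) := by linarith
  have hαv : (0:ℝ) < 1 - (v.re ^ 2 + v.im ^ 2) := by linarith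
  -- Step 1 : compute the inner integral
  rw [intervalIntegral.integral_congr
    (g := fun θ => max (max (SS u θ) (SS v θ)) 0 - max (min (SS u θ) (SS v θ)) 0)
    (fun θ _ => inner_integral u v hu' hv' θ)]
  -- continuity facts
  have hSSu : Continuous (SS u) := continuous_SS u
  have hSSv : Continuous (SS v) := continuous_SS v
  have hEc : Continuous (fun θ => max (max (SS u θ) (SS v θ)) 0 - max (min (SS u θ) (SS v θ)) 0) :=
    ((hSSu.max hSSv).max continuous_const).sub ((hSSu.min hSSv).max continuous_const)
  have habs : Continuous (fun θ => |SS u θ - SS v θ|) := (hSSu.sub hSSv).abs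
  -- the rotating sinusoid
  set Ac : ℝ := U0 v * (2 * u.re / (1 - (u.re ^ 2 + u.im ^ 2)))
      - U0 u * (2 * v.re / (1 - (v.re ^ 2 + v.im ^ 2))) with hAcdef
  set Bc : ℝ := U0 v * (2 * u.im / (1 - (u.re ^ 2 + u.im ^ 2)))
      - U0 u * (2 * v.im / (1 - (v.re ^ 2 + v.im ^ 2))) with hBcdef
  have hk : ∀ θ, U0 v * mm u θ - U0 u * mm v θ = Ac * Real.cos θ + Bc * Real.sin θ := by
    intro θ
    rw [hAcdef, hBcdef]
    unfold mm U0
    ring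
  have hUu := U0_pos hu'
  have hUv := U0_pos hv'
  have hAB : ¬ (Ac = 0 ∧ Bc = 0) := by
    rintro ⟨hA0, hB0⟩
    apply huv
    rw [hAcdef, sub_eq_zero] at hA0
    rw [hBcdef, sub_eq_zero] at hB0
    unfold U0 at hA0 hB0
    have h1 : (1 + (v.re ^ 2 + v.im ^ 2)) * u.re = (1 + (u.re ^ 2 + u.im ^ 2)) * v.re :=
      cross_helper hαu.ne' hαv.ne' hA0
    have h2 : (1 + (v.re ^ 2 + v.im ^ 2)) * u.im = (1 + (u.re ^ 2 + u.im ^ 2)) * v.im :=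
      cross_helper hαu.ne' hαv.ne' hB0
    have e1 : (1 + (v.re ^ 2 + v.im ^ 2)) ^ 2 * (u.re ^ 2 + u.im ^ 2)
        = (1 + (u.re ^ 2 + u.im ^ 2)) ^ 2 * (v.re ^ 2 + v.im ^ 2) := by
      linear_combination ((1 + (v.re ^ 2 + v.im ^ 2)) * u.re
          + (1 + (u.re ^ 2 + u.im ^ 2)) * v.re) * h1
        + ((1 + (v.re ^ 2 + v.im ^ 2)) * u.im + (1 + (u.re ^ 2 + u.im ^ 2)) * v.im) * h2
    have e2 : ((u.re ^ 2 + u.im ^ 2) - (v.re ^ 2 + v.im ^ 2))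
        * (1 - (u.re ^ 2 + u.im ^ 2) * (v.re ^ 2 + v.im ^ 2)) = 0 := by
      linear_combination e1
    have e3 : u.re ^ 2 + u.im ^ 2 = v.re ^ 2 + v.im ^ 2 := by
      rcases mul_eq_zero.mp e2 with h | h
      · linarith
      · exfalso
        have hu0 : (0:ℝ) ≤ u.re ^ 2 + u.im ^ 2 := by positivity
        have hv0 : (0:ℝ) ≤ v.re ^ 2 + v.im ^ 2 := by positivity
        nlinarith
    have hp : (0:ℝ) < 1 + (u.re ^ 2 + u.im ^ 2) := by positivity
    apply Complex.ext
    · rw [← e3] at h1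
      exact mul_left_cancel₀ hp.ne' h1
    · rw [← e3] at h2
      exact mul_left_cancel₀ hp.ne' h2
  set z : ℂ := ⟨Ac, Bc⟩ with hzdef
  have hzre : z.re = Ac := rfl
  have hzim : z.im = Bc := rfl
  have hz : z ≠ 0 := by
    intro h
    apply hAB
    constructor
    · simpa using congrArg Complex.re h
    · simpa using congrArg Complex.im h
  have hR : 0 < ‖z‖ := norm_pos_iff.mpr hz
  set R : ℝ := ‖z‖ with hRdef
  set ω : ℝ := Complex.arg z with hωdef
  have hcos : R * Real.cos ω = Ac := by
    rw [hωdef, Complex.cos_arg hz, hzre, ← hRdef]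
    field_simp
  have hsin : R * Real.sin ω = Bc := by
    rw [hωdef, Complex.sin_arg, hzim, ← hRdef]
    field_simp
  have hksign : ∀ θ, U0 v * mm u θ - U0 u * mm v θ = R * Real.cos (θ - ω) := by
    intro θ
    rw [hk θ, Real.cos_sub, ← hcos, ← hsin]
    ring
  -- pointwise comparison of SS u and SS v
  have hge : ∀ θ ∈ Set.Icc (ω - π / 2) (ω + π / 2), SS v θ ≤ SS u θ := by
    intro θ hθ
    rw [SS_le_SS_iff hv' hu' θ]
    have h1 : 0 ≤ R * Real.cos (θ - ω) :=
      mul_nonneg hR.le (Real.cos_nonneg_of_mem_Icc ⟨by linarith [hθ.1], by linarith [hθ.2]⟩)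
    linarith [hksign θ]
  have hle : ∀ θ ∈ Set.Icc (ω + π / 2) (ω + 3 * π / 2), SS u θ ≤ SS v θ := by
    intro θ hθ
    rw [SS_le_SS_iff hu' hv' θ]
    have hc : Real.cos (θ - ω) ≤ 0 := by
      have h2 : Real.cos (θ - ω - π) = - Real.cos (θ - ω) := Real.cos_sub_pi _
      have h3 : 0 ≤ Real.cos (θ - ω - π) :=
        Real.cos_nonneg_of_mem_Icc ⟨by linarith [hθ.1], by linarith [hθ.2]⟩
      linarith
    have h1 : R * Real.cos (θ - ω) ≤ 0 := mul_nonpos_iff.mpr (Or.inl ⟨hR.le, hc⟩)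
    linarith [hksign θ]
  -- the potential H and FTC
  set H : ℝ → ℝ := fun θ => Real.arsinh (pp u θ) - Real.arsinh (pp v θ) with hHdef
  have hderiv : ∀ θ, HasDerivAt H (SS u θ - SS v θ) θ :=
    fun θ => (hasDerivAt_gg u θ).sub (hasDerivAt_gg v θ)
  have hHper : H (ω + 3 * π / 2) = H (ω - π / 2) := by
    rw [hHdef]
    simp only
    rw [show ω + 3 * π / 2 = (ω - π / 2) + 2 * π by ring, pp_add_two_pi, pp_add_two_pi]
  have hHneg : H (ω - π / 2) = - H (ω + π / 2) := by
    rw [hHdef]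
    simp only
    rw [show ω - π / 2 = (ω + π / 2) - π by ring, pp_sub_pi, pp_sub_pi,
      Real.arsinh_neg, Real.arsinh_neg]
    ring
  have hint1 : ∫ θ in (ω - π / 2)..(ω + π / 2), (SS u θ - SS v θ)
      = H (ω + π / 2) - H (ω - π / 2) :=
    intervalIntegral.integral_eq_sub_of_hasDerivAt (fun θ _ => hderiv θ)
      ((hSSu.sub hSSv).intervalIntegrable _ _)
  have hint2 : ∫ θ in (ω + π / 2)..(ω + 3 * π / 2), (SS v θ - SS u θ)
      = H (ω + π / 2) - H (ω + 3 * π / 2) := by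
    have h := intervalIntegral.integral_eq_sub_of_hasDerivAt
      (f := fun θ => -(H θ)) (f' := fun θ => SS v θ - SS u θ)
      (a := ω + π / 2) (b := ω + 3 * π / 2)
      (fun θ _ => by have := (hderiv θ).neg; rw [neg_sub] at this; exact this)
      ((hSSv.sub hSSu).intervalIntegrable _ _)
    rw [h]
    ring
  have hpi := Real.pi_pos
  have hC1 : ∫ θ in (ω - π / 2)..(ω + π / 2), |SS u θ - SS v θ|
      = ∫ θ in (ω - π / 2)..(ω + π / 2), (SS u θ - SS v θ) := by
    apply intervalIntegral.integral_congr
    intro θ hθ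
    rw [Set.uIcc_of_le (by linarith)] at hθ
    exact abs_of_nonneg (sub_nonneg.mpr (hge θ hθ))
  have hC2 : ∫ θ in (ω + π / 2)..(ω + 3 * π / 2), |SS u θ - SS v θ|
      = ∫ θ in (ω + π / 2)..(ω + 3 * π / 2), (SS v θ - SS u θ) := by
    apply intervalIntegral.integral_congr
    intro θ hθ
    rw [Set.uIcc_of_le (by linarith)] at hθ
    show |SS u θ - SS v θ| = SS v θ - SS u θ
    rw [abs_of_nonpos (sub_nonpos.mpr (hle θ hθ)), neg_sub]
  -- periodicity
  have hperabs : Function.Periodic (fun θ => |SS u θ - SS v θ|) (2 * π) := by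
    intro θ
    simp only [SS_add_two_pi]
  have hperE : Function.Periodic
      (fun θ => max (max (SS u θ) (SS v θ)) 0 - max (min (SS u θ) (SS v θ)) 0) (2 * π) := by
    intro θ
    simp only [SS_add_two_pi]
  -- the doubling identity
  have key : (∫ θ in (0:ℝ)..(2 * π),
        (max (max (SS u θ) (SS v θ)) 0 - max (min (SS u θ) (SS v θ)) 0))
      + (∫ θ in (0:ℝ)..(2 * π),
        (max (max (SS u θ) (SS v θ)) 0 - max (min (SS u θ) (SS v θ)) 0))
      = 4 * H (ω + π / 2) := by
    have s1 : (∫ θ in (0:ℝ)..(2 * π),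
        (max (max (SS u (θ + π)) (SS v (θ + π))) 0 - max (min (SS u (θ + π)) (SS v (θ + π))) 0))
        = ∫ θ in (0:ℝ)..(2 * π),
          (max (max (SS u θ) (SS v θ)) 0 - max (min (SS u θ) (SS v θ)) 0) := by
      rw [intervalIntegral.integral_comp_add_right
        (fun θ => max (max (SS u θ) (SS v θ)) 0 - max (min (SS u θ) (SS v θ)) 0) π]
      rw [show (0:ℝ) + π = π by ring, show 2 * π + π = π + 2 * π by ring]
      have := hperE.intervalIntegral_add_eq π 0
      rw [this, zero_add]
    have s2 : (∫ θ in (0:ℝ)..(2 * π),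
          (max (max (SS u θ) (SS v θ)) 0 - max (min (SS u θ) (SS v θ)) 0))
        + (∫ θ in (0:ℝ)..(2 * π),
          (max (max (SS u θ) (SS v θ)) 0 - max (min (SS u θ) (SS v θ)) 0))
        = ∫ θ in (0:ℝ)..(2 * π),
          ((max (max (SS u θ) (SS v θ)) 0 - max (min (SS u θ) (SS v θ)) 0)
            + (max (max (SS u (θ + π)) (SS v (θ + π))) 0
                - max (min (SS u (θ + π)) (SS v (θ + π))) 0)) := by
      have hgint : IntervalIntegrable
          (fun θ => max (max (SS u (θ + π)) (SS v (θ + π))) 0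
            - max (min (SS u (θ + π)) (SS v (θ + π))) 0) volume 0 (2 * π) :=
        (hEc.comp (continuous_id.add continuous_const)).intervalIntegrable _ _
      rw [intervalIntegral.integral_add (hEc.intervalIntegrable _ _) hgint]
      rw [s1]
    have s3 : ∀ θ : ℝ, (max (max (SS u θ) (SS v θ)) 0 - max (min (SS u θ) (SS v θ)) 0)
        + (max (max (SS u (θ + π)) (SS v (θ + π))) 0
            - max (min (SS u (θ + π)) (SS v (θ + π))) 0)
        = |SS u θ - SS v θ| := by
      intro θ
      rw [SS_add_pi u θ, SS_add_pi v θ]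
      exact xor_sum (SS u θ) (SS v θ)
    rw [s2, intervalIntegral.integral_congr (fun θ _ => s3 θ)]
    have s4 : ∫ θ in (0:ℝ)..(2 * π), |SS u θ - SS v θ|
        = ∫ θ in (ω - π / 2)..(ω - π / 2 + 2 * π), |SS u θ - SS v θ| := by
      have := hperabs.intervalIntegral_add_eq 0 (ω - π / 2)
      rw [zero_add] at this
      exact this
    rw [s4]
    have s5 : ∫ θ in (ω - π / 2)..(ω - π / 2 + 2 * π), |SS u θ - SS v θ|
        = (∫ θ in (ω - π / 2)..(ω + π / 2), |SS u θ - SS v θ|)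
          + ∫ θ in (ω + π / 2)..(ω - π / 2 + 2 * π), |SS u θ - SS v θ| :=
      (intervalIntegral.integral_add_adjacent_intervals (habs.intervalIntegrable _ _)
        (habs.intervalIntegrable _ _)).symm
    rw [s5, show ω - π / 2 + 2 * π = ω + 3 * π / 2 by ring, hC1, hint1, hC2, hint2, hHper, hHneg]
    ring
  -- positivity of H (ω + π/2)
  have hHpos : 0 ≤ H (ω + π / 2) := by
    have h0 : 0 ≤ ∫ θ in (ω - π / 2)..(ω + π / 2), |SS u θ - SS v θ| :=
      intervalIntegral.integral_nonneg (by linarith) (fun θ _ => abs_nonneg _)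
    rw [hC1, hint1, hHneg] at h0
    linarith
  -- value of H at the critical angle
  set θs : ℝ := ω + π / 2 with hθsdef
  have hk0 : U0 v * mm u θs = U0 u * mm v θs := by
    have h := hksign θs
    rw [hθsdef] at h ⊢
    rw [show ω + π / 2 - ω = π / 2 by ring, Real.cos_pi_div_two, mul_zero] at h
    linarith
  have hUu2 := U0_sq hu' θs
  have hVv2 := U0_sq hv' θs
  have hU1 := U0_ge_one hu'
  have hV1 := U0_ge_one hv'
  have hcoshH : Real.cosh (H θs) = U0 u * U0 v
      - (mm u θs * mm v θs + pp u θs * pp v θs) := by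
    rw [hHdef]
    simp only
    exact cosh_arsinh_sub (U0 u) (U0 v) (mm u θs) (mm v θs) (pp u θs) (pp v θs)
      hUu2 hVv2 hU1 hV1 hk0
  have hdot : mm u θs * mm v θs + pp u θs * pp v θs
      = 4 * (u.re * v.re + u.im * v.im)
        / ((1 - (u.re ^ 2 + u.im ^ 2)) * (1 - (v.re ^ 2 + v.im ^ 2))) := by
    have hsc := Real.sin_sq_add_cos_sq θs
    unfold mm pp
    rw [div_mul_div_comm, div_mul_div_comm, ← add_div]
    congr 1
    linear_combination (4 * (u.re * v.re + u.im * v.im)) * hsc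
  have hcosh2 : Real.cosh (H θs) = 1 + 2 * ‖u - v‖ ^ 2
      / ((1 - ‖u‖ ^ 2) * (1 - ‖v‖ ^ 2)) := by
    have hnsq : ∀ w : ℂ, Complex.normSq w = w.re ^ 2 + w.im ^ 2 := fun w => by
      rw [Complex.normSq_apply]; ring
    rw [hcoshH, hdot, Complex.sq_norm, Complex.sq_norm, Complex.sq_norm,
      hnsq, hnsq, hnsq, Complex.sub_re, Complex.sub_im]
    unfold U0
    field_simp [hαu.ne', hαv.ne']
    ring
  have hfinal : poincareDist u v = H θs := by
    rw [poincareDist, ← hcosh2, _root_.arcosh]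
    rw [show Real.cosh (H θs) ^ 2 - 1 = Real.sinh (H θs) ^ 2 by
      have := Real.cosh_sq (H θs); linarith]
    rw [Real.sqrt_sq (Real.sinh_nonneg_iff.mpr hHpos), Real.cosh_add_sinh, Real.log_exp]
  rw [hfinal]
  linarith [key]
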